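/- First-order bubble asymptotics: with L(z) = cos²(arg(z)/2) and F_ε(z) = z/(ε-z), for fixed z ∈ ℍ one has L(F_ε(z)) = (1/4)(Im(1/z))²·ε² + o(ε²) as ε → 0+. -/

import Mathlib

open Filter Asymptotics Set

/-- Schramm's left-passage probability in complex form, `L(z) = cos²(arg(z)/2)`. -/
noncomputable def Lc (z : ℂ) : ℝ := Real.cos (z.arg / 2) ^ 2

/-- `F_ε(z) = z/(ε - z)`. -/
noncomputable def Fmap (ε : ℝ) (z : ℂ) : ℂ := z / (ε - z)

/-- for fixed `z ∈ ℍ`,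
`L(F_ε(z)) = (1/4)(Im(1/z))²·ε² + o(ε²)` as `ε → 0+`. -/
theorem stmt11 (z : ℂ) (hz : 0 < z.im) :
    (fun ε : ℝ => Lc (Fmap ε z) - (1/4) * ((1 / z).im) ^ 2 * ε ^ 2)
      =o[nhdsWithin 0 (Ioi 0)] (fun ε : ℝ => ε ^ 2) := by
  have hz0 : z ≠ 0 := by
    intro h; rw [h] at hz; simp at hz
  set x : ℝ := z.re with hx
  set y : ℝ := z.im with hy
  set r : ℝ := ‖z‖ with hr
  have hrpos : 0 < r := norm_pos_iff.mpr hz0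
  have hr2 : r ^ 2 = x ^ 2 + y ^ 2 := by
    rw [hr, Complex.sq_norm, Complex.normSq_apply]; ring
  set s : ℝ → ℝ := fun ε => ‖(ε : ℂ) - z‖ with hs
  have hne : ∀ ε : ℝ, (ε : ℂ) - z ≠ 0 := by
    intro ε h
    have : ((ε : ℂ) - z).im = 0 := by rw [h]; simp
    simp only [Complex.sub_im, Complex.ofReal_im] at this
    linarith
  have hspos : ∀ ε : ℝ, 0 < s ε := fun ε => norm_pos_iff.mpr (hne ε)
  have hs2 : ∀ ε : ℝ, s ε ^ 2 = (ε - x) ^ 2 + y ^ 2 := by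
    intro ε
    rw [hs]; simp only [Complex.sq_norm, Complex.normSq_apply,
      Complex.sub_re, Complex.sub_im, Complex.ofReal_re, Complex.ofReal_im]
    ring
  set D : ℝ → ℝ := fun ε => r * s ε + r ^ 2 - ε * x with hD
  have hsq : ∀ ε : ℝ, r ^ 2 * s ε ^ 2 = (ε * x - r ^ 2) ^ 2 + ε ^ 2 * y ^ 2 := by
    intro ε
    rw [hs2, hr2]; ring
  have hDpos : ∀ ε : ℝ, 0 < D ε := by
    intro ε
    rcases le_or_gt (ε * x) (r ^ 2) with h | h
    · have := mul_pos hrpos (hspos ε)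
      simp only [hD]; linarith
    · have hε : ε ≠ 0 := by
        intro h0; rw [h0] at h; simp at h; nlinarith
      have hεy : 0 < ε ^ 2 * y ^ 2 := by positivity
      have h1 : r ^ 2 * s ε ^ 2 > (ε * x - r ^ 2) ^ 2 := by
        have := hsq ε; linarith
      have h2 : r * s ε > ε * x - r ^ 2 := by
        nlinarith [mul_pos hrpos (hspos ε), hspos ε]
      simp only [hD]; linarith
  -- the exact formula
  have key : ∀ ε : ℝ, Lc (Fmap ε z) = ε ^ 2 * y ^ 2 / (2 * r * s ε * D ε) := by
    intro ε
    have hw0 : Fmap ε z ≠ 0 := div_ne_zero hz0 (hne ε)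
    have hcos : Real.cos (Fmap ε z).arg = (Fmap ε z).re / ‖Fmap ε z‖ :=
      Complex.cos_arg hw0
    have habs : ‖Fmap ε z‖ = r / s ε := by
      rw [Fmap, norm_div]
    have hre : (Fmap ε z).re = (ε * x - r ^ 2) / s ε ^ 2 := by
      rw [Fmap, Complex.div_re]
      simp only [Complex.sub_re, Complex.sub_im, Complex.ofReal_re, Complex.ofReal_im]
      rw [show Complex.normSq ((ε:ℂ) - z) = s ε ^ 2 by rw [hs, Complex.sq_norm]]
      rw [hr2]
      rw [← hx, ← hy]
      ring_nf
    have hhalf : Lc (Fmap ε z) = 1 / 2 + Real.cos (Fmap ε z).arg / 2 := by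
      rw [Lc, Real.cos_sq, two_mul, add_halves]
    rw [hhalf, hcos, habs, hre]
    have hsne := (hspos ε).ne'
    have hDne := (hDpos ε).ne'
    have hrne := hrpos.ne'
    have h5 : (1:ℝ) / 2 + (ε * x - r ^ 2) / s ε ^ 2 / (r / s ε) / 2
        = (r * s ε + ε * x - r ^ 2) / (2 * r * s ε) := by
      field_simp
      ring
    rw [h5, div_eq_div_iff (by positivity)
      (ne_of_gt (mul_pos (mul_pos (by positivity) (hspos ε)) (hDpos ε)))]
    simp only [hD]
    linear_combination (2 * r * s ε) * hsq ε
  -- reduce to a limit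
  have hc : (1 / z).im = -y / r ^ 2 := by
    rw [one_div, Complex.inv_im, hr, Complex.sq_norm]
  rw [isLittleO_iff_tendsto']
  · have hev : ∀ᶠ ε in nhdsWithin (0:ℝ) (Ioi 0),
        (Lc (Fmap ε z) - 1/4 * ((1/z).im) ^ 2 * ε ^ 2) / ε ^ 2
          = y ^ 2 / (2 * r * s ε * D ε) - 1/4 * ((1/z).im) ^ 2 := by
      filter_upwards [self_mem_nhdsWithin] with ε hε
      have hε0 : (ε : ℝ) ≠ 0 := ne_of_gt hε
      rw [key ε]
      have hden : 2 * r * s ε * D ε ≠ 0 :=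
        ne_of_gt (mul_pos (mul_pos (by positivity) (hspos ε)) (hDpos ε))
      field_simp
    rw [tendsto_congr' hev]
    have hcont : Tendsto (fun ε : ℝ => y ^ 2 / (2 * r * s ε * D ε) - 1/4 * ((1/z).im) ^ 2)
        (nhds 0) (nhds (y ^ 2 / (2 * r * s 0 * D 0) - 1/4 * ((1/z).im) ^ 2)) := by
      have hscont : Continuous s := by
        rw [hs]; exact continuous_norm.comp (Complex.continuous_ofReal.sub continuous_const)
      have hDcont : Continuous D := by
        rw [hD]
        exact ((continuous_const.mul hscont).add continuous_const).sub
          (continuous_id.mul continuous_const)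
      apply Tendsto.sub _ tendsto_const_nhds
      apply Tendsto.div tendsto_const_nhds
      · exact ((continuous_const.mul hscont).mul hDcont).tendsto 0
      · exact ne_of_gt (mul_pos (mul_pos (by positivity) (hspos 0)) (hDpos 0))
    have hval : y ^ 2 / (2 * r * s 0 * D 0) - 1/4 * ((1/z).im) ^ 2 = 0 := by
      have hs0 : s 0 = r := by
        rw [hs, hr]; simp
      have hD0 : D 0 = 2 * r ^ 2 := by
        simp only [hD]
        rw [hs0]; ring
      rw [hD0, hs0, hc]
      field_simp
      ring
    rw [hval] at hcont
    exact hcont.mono_left nhdsWithin_le_nhds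
  · filter_upwards [self_mem_nhdsWithin] with ε hε h
    exact absurd h (pow_ne_zero 2 (ne_of_gt hε))
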